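/- Let K₀ be a complex Hilbert space, let S be the unilateral shift on K := ℓ²(ℕ, K₀), let q be a real number with 0 < q < 1, and let Y be a bounded self-adjoint operator on K satisfying q²SY = YS. Then there exists a bounded self-adjoint operator Y₀ on K₀ such that Y(eₙ(ζ)) = q^{2n} eₙ(Y₀ζ) for all n ∈ ℕ and all ζ ∈ K₀. -/

import Mathlib

open ContinuousLinearMap

local notation "⟪" x ", " y "⟫" => @inner ℂ _ _ x y

private lemma lp_single_add' {K₀ : Type*} [NormedAddCommGroup K₀] [InnerProductSpace ℂ K₀]
    (i : ℕ) (a b : K₀) :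
    (lp.single 2 i (a + b) : lp (fun _ : ℕ => K₀) 2) = lp.single 2 i a + lp.single 2 i b := by
  refine lp.ext (funext fun j => ?_)
  by_cases hj : j = i
  · subst hj; simp [lp.single_apply_self]
  · simp [lp.single_apply_ne _ _ _ hj]

/-- Let `S` be the unilateral shift on `ℓ²(ℕ, K₀)` (determined by
`S (eₙ ζ) = eₙ₊₁ ζ`), let `0 < q < 1` and let `Y` be a bounded self-adjoint operator
satisfying `q² S Y = Y S`.  Then there is a bounded self-adjoint operator `Y₀` on `K₀`
such that `Y (eₙ ζ) = q^(2n) eₙ (Y₀ ζ)` for all `n` and `ζ`. -/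
theorem shift_commutation_diagonalization
    {K₀ : Type*} [NormedAddCommGroup K₀] [InnerProductSpace ℂ K₀] [CompleteSpace K₀]
    (q : ℝ) (hq0 : 0 < q) (hq1 : q < 1)
    (S Y : lp (fun _ : ℕ => K₀) 2 →L[ℂ] lp (fun _ : ℕ => K₀) 2)
    (hS : ∀ (n : ℕ) (ζ : K₀), S (lp.single 2 n ζ) = lp.single 2 (n + 1) ζ)
    (hY : IsSelfAdjoint Y)
    (hrel : ((q : ℂ) ^ 2) • (S ∘L Y) = Y ∘L S) :
    ∃ Y₀ : K₀ →L[ℂ] K₀, IsSelfAdjoint Y₀ ∧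
      ∀ (n : ℕ) (ζ : K₀),
        Y (lp.single 2 n ζ) = ((q : ℂ) ^ (2 * n)) • lp.single 2 n (Y₀ ζ) := by
  have hsym : ∀ x y, ⟪Y x, y⟫ = ⟪x, Y y⟫ :=
    (ContinuousLinearMap.isSelfAdjoint_iff_isSymmetric.mp hY)
  -- step relation
  have hstep : ∀ (n : ℕ) (ζ : K₀),
      Y (lp.single 2 (n + 1) ζ) = ((q : ℂ) ^ 2) • S (Y (lp.single 2 n ζ)) := by
    intro n ζ
    have := congrArg (fun T : lp (fun _ : ℕ => K₀) 2 →L[ℂ] lp (fun _ : ℕ => K₀) 2 =>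
      T (lp.single 2 n ζ)) hrel
    simp only [smul_apply, comp_apply] at this
    rw [← hS n ζ]
    exact this.symm
  -- orthogonality to range of S
  have horth : ∀ (ζ : K₀) (x : lp (fun _ : ℕ => K₀) 2),
      ⟪(lp.single 2 0 ζ : lp (fun _ : ℕ => K₀) 2), S x⟫ = 0 := by
    intro ζ x
    set φ : lp (fun _ : ℕ => K₀) 2 →L[ℂ] ℂ :=
      (innerSL ℂ (lp.single 2 0 ζ : lp (fun _ : ℕ => K₀) 2)) ∘L S with hφ
    have hsum : HasSum (fun n => lp.single 2 n (x n)) x :=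
      lp.hasSum_single (by norm_num) x
    have h2 : HasSum (fun n => φ (lp.single 2 n (x n))) (φ x) := hsum.mapL φ
    have h3 : ∀ n, φ (lp.single 2 n (x n)) = 0 := by
      intro n
      simp only [hφ, comp_apply, innerSL_apply_apply, hS n (x n)]
      rw [lp.inner_single_right]
      rw [lp.single_apply_ne _ _ _ (by omega : (n + 1 : ℕ) ≠ 0)]
      simp
    have : φ x = 0 := h2.unique (by simpa [h3] using hasSum_zero)
    simpa [hφ] using this
  -- iterated formula used to kill higher components
  have hiter : ∀ (n : ℕ) (ζ η : K₀), ⟪Y (lp.single 2 0 ζ), lp.single 2 (n + 1) η⟫ = 0 := by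
    intro n ζ η
    rw [hsym, hstep n η]
    rw [inner_smul_right]
    rw [horth]
    simp
  -- components of Y (single 0 ζ)
  have hcomp : ∀ (ζ : K₀) (m : ℕ), m ≠ 0 → (Y (lp.single 2 0 ζ) : ∀ _ : ℕ, K₀) m = 0 := by
    intro ζ m hm
    obtain ⟨k, rfl⟩ : ∃ k, m = k + 1 := ⟨m - 1, by omega⟩
    have h := hiter k ζ ((Y (lp.single 2 0 ζ) : ∀ _ : ℕ, K₀) (k + 1))
    rw [lp.inner_single_right] at h
    exact inner_self_eq_zero.mp h
  have hD : ∀ ζ : K₀, Y (lp.single 2 0 ζ) =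
      lp.single 2 0 ((Y (lp.single 2 0 ζ) : ∀ _ : ℕ, K₀) 0) := by
    intro ζ
    refine lp.ext (funext fun m => ?_)
    by_cases hm : m = 0
    · subst hm; rw [lp.single_apply_self]
    · rw [hcomp ζ m hm, lp.single_apply_ne _ _ _ hm]
  -- the operator Y₀
  let Y₀l : K₀ →ₗ[ℂ] K₀ :=
    { toFun := fun ζ => (Y (lp.single 2 0 ζ) : ∀ _ : ℕ, K₀) 0
      map_add' := by
        intro a b
        show (Y (lp.single 2 0 (a+b)) : ∀ _ : ℕ, K₀) 0 = _
        rw [lp_single_add', map_add]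
        simp [lp.coeFn_add]
      map_smul' := by
        intro c a
        show (Y (lp.single 2 0 (c • a)) : ∀ _ : ℕ, K₀) 0 = _
        rw [lp.single_smul, map_smul]
        simp [lp.coeFn_smul] }
  have hY₀norm : ∀ ζ, ‖Y₀l ζ‖ ≤ ‖Y‖ * ‖ζ‖ := by
    intro ζ
    have h1 : ‖Y₀l ζ‖ ≤ ‖Y (lp.single 2 0 ζ)‖ :=
      lp.norm_apply_le_norm (by norm_num) _ 0
    have h2 : ‖Y (lp.single 2 0 ζ)‖ ≤ ‖Y‖ * ‖(lp.single 2 0 ζ : lp (fun _ : ℕ => K₀) 2)‖ :=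
      Y.le_opNorm _
    have h3 : ‖(lp.single 2 0 ζ : lp (fun _ : ℕ => K₀) 2)‖ = ‖ζ‖ := by
      have := lp.norm_single (p := 2) (E := fun _ : ℕ => K₀) (by norm_num)
        0 ζ
      simpa using this
    calc ‖Y₀l ζ‖ ≤ ‖Y (lp.single 2 0 ζ)‖ := h1
      _ ≤ ‖Y‖ * ‖ζ‖ := by rw [← h3]; exact h2
  let Y₀ : K₀ →L[ℂ] K₀ := Y₀l.mkContinuous ‖Y‖ hY₀norm
  have hY₀apply : ∀ ζ : K₀, Y (lp.single 2 0 ζ) = lp.single 2 0 (Y₀ ζ) := fun ζ => hD ζ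
  refine ⟨Y₀, ?_, ?_⟩
  · rw [ContinuousLinearMap.isSelfAdjoint_iff_isSymmetric]
    intro a b
    simp only [ContinuousLinearMap.coe_coe]
    have h1 : ⟪Y₀ a, b⟫ = ⟪Y (lp.single 2 0 a), (lp.single 2 0 b : lp (fun _ : ℕ => K₀) 2)⟫ := by
      rw [hY₀apply, lp.inner_single_left, lp.single_apply_self]
    have h2 : ⟪a, Y₀ b⟫ = ⟪(lp.single 2 0 a : lp (fun _ : ℕ => K₀) 2), Y (lp.single 2 0 b)⟫ := by
      rw [hY₀apply, lp.inner_single_right, lp.single_apply_self]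
    rw [h1, h2, hsym]
  · intro n
    induction n with
    | zero => intro ζ; simpa using hY₀apply ζ
    | succ n ih =>
      intro ζ
      rw [hstep n ζ, ih ζ, map_smul, hS n (Y₀ ζ), smul_smul, ← pow_add]
      ring_nf
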